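/- Let f ∈ S_0(R) and define g(x) = ∫_{−∞}^x f(t) dt. Then g(x) = −∫_x^{+∞} f(t) dt for all x ∈ R, g′ = f, g ∈ S_0(R), and for every k ∈ N one has sup_{x∈R} ⟨x⟩^k |g(x)| ≤ ρ_{2k+4}(f) · ∫_R (1+t²)^{−k/2−2} dt < +∞. Consequently Ff(ξ) = 2πi ξ Fg(ξ) for all ξ ∈ R. -/

import Mathlib

open MeasureTheory Complex SchwartzMap
open scoped ContDiff

noncomputable section

/-- The Schwartz seminorms `ρ_ν(φ) = sup_{x ∈ ℝ, m ≤ ν} ⟨x⟩^ν |φ^{(m)}(x)|` on `𝒮(ℝ)`. -/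
def rho1 (ν : ℕ) (f : ℝ → ℂ) : ℝ :=
  ⨆ q : ℝ × Fin (ν + 1),
    Real.sqrt (1 + q.1 ^ 2) ^ ν * ‖iteratedDeriv (q.2 : ℕ) f q.1‖

lemma rho1_bddAbove (ν : ℕ) (f : SchwartzMap ℝ ℂ) :
    BddAbove (Set.range fun q : ℝ × Fin (ν + 1) =>
      Real.sqrt (1 + q.1 ^ 2) ^ ν * ‖iteratedDeriv (q.2 : ℕ) (⇑f) q.1‖) := by
  refine ⟨2 ^ ν * (Finset.Iic ((ν, ν) : ℕ × ℕ)).sup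
    (fun m => SchwartzMap.seminorm ℝ m.1 m.2) f, ?_⟩
  rintro _ ⟨⟨x, m⟩, rfl⟩
  have h1 : Real.sqrt (1 + x ^ 2) ≤ 1 + ‖x‖ := by
    rw [Real.norm_eq_abs]
    calc Real.sqrt (1 + x ^ 2) ≤ Real.sqrt ((1 + |x|) ^ 2) :=
          Real.sqrt_le_sqrt (by nlinarith [abs_nonneg x, _root_.sq_abs x])
      _ = 1 + |x| := Real.sqrt_sq (by positivity)
  calc Real.sqrt (1 + x ^ 2) ^ ν * ‖iteratedDeriv (m : ℕ) (⇑f) x‖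
      ≤ (1 + ‖x‖) ^ ν * ‖iteratedFDeriv ℝ (m : ℕ) (⇑f) x‖ := by
        rw [norm_iteratedFDeriv_eq_norm_iteratedDeriv]
        gcongr
    _ ≤ _ := SchwartzMap.one_add_le_sup_seminorm_apply (𝕜 := ℝ) (m := (ν, ν)) le_rfl
        (Nat.lt_succ_iff.mp m.isLt) f x

lemma rho1_nonneg (ν : ℕ) (f : SchwartzMap ℝ ℂ) : 0 ≤ rho1 ν (⇑f) :=
  le_trans (by positivity) (le_ciSup (rho1_bddAbove ν f) ((0 : ℝ), (0 : Fin (ν + 1))))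

lemma integrable_aux {c : ℝ} (hc : c ≤ -1) :
    Integrable (fun t : ℝ => (1 + t ^ 2 : ℝ) ^ c) := by
  refine integrable_inv_one_add_sq.mono' ?_ ?_
  · exact ((continuous_const.add (continuous_pow 2)).rpow_const
      (fun x => Or.inl (by positivity : (1 + x ^ 2 : ℝ) ≠ 0))).aestronglyMeasurable
  · refine Filter.Eventually.of_forall fun t => ?_
    have hb : (1 : ℝ) ≤ 1 + t ^ 2 := by nlinarith [sq_nonneg t]
    rw [Real.norm_eq_abs, _root_.abs_of_nonneg (Real.rpow_nonneg (by positivity) _)]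
    calc (1 + t ^ 2 : ℝ) ^ c ≤ (1 + t ^ 2 : ℝ) ^ (-1 : ℝ) :=
          Real.rpow_le_rpow_of_exponent_le hb hc
      _ = (1 + t ^ 2 : ℝ)⁻¹ := Real.rpow_neg_one _

lemma key_pointwise (f : SchwartzMap ℝ ℂ) (k : ℕ) {x t : ℝ} (hxt : x ^ 2 ≤ t ^ 2) :
    Real.sqrt (1 + x ^ 2) ^ k * ‖f t‖ ≤
      rho1 (2 * k + 4) (⇑f) * (1 + t ^ 2 : ℝ) ^ (-((k : ℝ) / 2) - 2) := by
  have ha : (0 : ℝ) < 1 + t ^ 2 := by positivity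
  have hsq : ∀ n : ℕ, Real.sqrt (1 + t ^ 2) ^ n = (1 + t ^ 2 : ℝ) ^ ((n : ℝ) / 2) := by
    intro n
    rw [Real.sqrt_eq_rpow, ← Real.rpow_natCast ((1 + t^2 : ℝ) ^ ((1:ℝ)/2)) n,
      ← Real.rpow_mul ha.le]
    congr 1
    ring
  have hrho : (1 + t ^ 2 : ℝ) ^ ((2 * k + 4 : ℕ) / 2 : ℝ) * ‖f t‖ ≤ rho1 (2 * k + 4) (⇑f) := by
    have := le_ciSup (rho1_bddAbove (2 * k + 4) f) ((t : ℝ), (0 : Fin (2 * k + 4 + 1)))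
    simpa [rho1, hsq] using this
  calc Real.sqrt (1 + x ^ 2) ^ k * ‖f t‖
      ≤ Real.sqrt (1 + t ^ 2) ^ k * ‖f t‖ := by
        have := Real.sqrt_le_sqrt (show 1 + x ^ 2 ≤ 1 + t ^ 2 by linarith)
        gcongr
    _ = (1 + t ^ 2 : ℝ) ^ (-((k : ℝ) / 2) - 2) *
          ((1 + t ^ 2 : ℝ) ^ ((2 * k + 4 : ℕ) / 2 : ℝ) * ‖f t‖) := by
        rw [hsq, ← mul_assoc, ← Real.rpow_add ha]
        push_cast
        ring_nf
    _ ≤ (1 + t ^ 2 : ℝ) ^ (-((k : ℝ) / 2) - 2) * rho1 (2 * k + 4) (⇑f) := by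
        exact mul_le_mul_of_nonneg_left hrho (Real.rpow_nonneg ha.le _)
    _ = _ := mul_comm _ _

lemma set_bound (f : SchwartzMap ℝ ℂ) (k : ℕ) (x : ℝ) {s : Set ℝ} (hs : MeasurableSet s)
    (hst : ∀ t ∈ s, x ^ 2 ≤ t ^ 2) :
    Real.sqrt (1 + x ^ 2) ^ k * ‖∫ t in s, f t‖ ≤
      rho1 (2 * k + 4) (⇑f) * ∫ t : ℝ, ((1 + t ^ 2 : ℝ) ^ (-((k : ℝ) / 2) - 2) : ℝ) := by
  have hInt : Integrable (fun t : ℝ => (1 + t ^ 2 : ℝ) ^ (-((k : ℝ) / 2) - 2)) :=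
    integrable_aux (by have : (0:ℝ) ≤ (k:ℝ)/2 := by positivity
                       linarith)
  have hrho := rho1_nonneg (2 * k + 4) f
  calc Real.sqrt (1 + x ^ 2) ^ k * ‖∫ t in s, f t‖
      ≤ Real.sqrt (1 + x ^ 2) ^ k * ∫ t in s, ‖f t‖ := by
        have := norm_integral_le_integral_norm (μ := volume.restrict s) (f := fun t => f t)
        gcongr
    _ = ∫ t in s, Real.sqrt (1 + x ^ 2) ^ k * ‖f t‖ := (integral_const_mul _ _).symm
    _ ≤ ∫ t in s, rho1 (2 * k + 4) (⇑f) * (1 + t ^ 2 : ℝ) ^ (-((k : ℝ) / 2) - 2) := by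
        refine setIntegral_mono_on ?_ ?_ hs ?_
        · exact ((f.integrable (μ := volume)).norm.const_mul _).integrableOn
        · exact (hInt.const_mul _).integrableOn
        · exact fun t ht => key_pointwise f k (hst t ht)
    _ = rho1 (2 * k + 4) (⇑f) * ∫ t in s, (1 + t ^ 2 : ℝ) ^ (-((k : ℝ) / 2) - 2) :=
        integral_const_mul _ _
    _ ≤ _ := by
        refine mul_le_mul_of_nonneg_left ?_ hrho
        refine setIntegral_le_integral hInt ?_
        exact Filter.Eventually.of_forall fun t => Real.rpow_nonneg (by positivity) _

lemma integrable_cpoly_mul (f : SchwartzMap ℝ ℂ) (m : ℕ) :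
    Integrable (fun x : ℝ => (x : ℂ) ^ m * f x) := by
  refine (f.integrable_pow_mul (μ := volume) m).mono' ?_ ?_
  · exact ((Complex.continuous_ofReal.pow m).mul f.continuous).aestronglyMeasurable
  · refine Filter.Eventually.of_forall fun x => ?_
    simp [abs_of_nonneg, Real.norm_eq_abs]

/-- For `f ∈ 𝒮₀(ℝ)`, the primitive `g(x) = ∫_{−∞}^x f(t) dt`
equals `−∫_x^∞ f(t) dt`, satisfies `g' = f`, belongs to `𝒮₀(ℝ)`, obeys the bound
`⟨x⟩^k |g(x)| ≤ ρ_{2k+4}(f) ∫ (1+t²)^{−k/2−2} dt < ∞`, and `Ff(ξ) = 2πiξ Fg(ξ)`. -/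
theorem lizorkin_primitive (f : SchwartzMap ℝ ℂ)
    (hf : ∀ m : ℕ, ∫ x : ℝ, (x : ℂ) ^ m * f x = 0) :
    (∀ x : ℝ, (∫ t in Set.Iic x, f t) = -∫ t in Set.Ici x, f t) ∧
    (∀ x : ℝ, HasDerivAt (fun y => ∫ t in Set.Iic y, f t) (f x) x) ∧
    (∃ G : SchwartzMap ℝ ℂ, (⇑G = fun x => ∫ t in Set.Iic x, f t) ∧
      ∀ m : ℕ, ∫ x : ℝ, (x : ℂ) ^ m * G x = 0) ∧
    (∀ k : ℕ,
      Integrable (fun t : ℝ => ((1 + t ^ 2 : ℝ) ^ (-((k : ℝ) / 2) - 2) : ℝ)) ∧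
      ∀ x : ℝ,
        Real.sqrt (1 + x ^ 2) ^ k * ‖∫ t in Set.Iic x, f t‖ ≤
          rho1 (2 * k + 4) (⇑f) *
            ∫ t : ℝ, ((1 + t ^ 2 : ℝ) ^ (-((k : ℝ) / 2) - 2) : ℝ)) ∧
    (∀ ξ : ℝ,
      VectorFourier.fourierIntegral Real.fourierChar volume (innerₗ ℝ) (⇑f) ξ =
        2 * (Real.pi : ℂ) * Complex.I * (ξ : ℂ) *
          VectorFourier.fourierIntegral Real.fourierChar volume (innerₗ ℝ)
            (fun x => ∫ t in Set.Iic x, f t) ξ) := by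
  have hint : Integrable (⇑f) := f.integrable (μ := volume)
  have h0 : (∫ t : ℝ, f t) = 0 := by simpa using hf 0
  have part1 : ∀ x : ℝ, (∫ t in Set.Iic x, f t) = -∫ t in Set.Ici x, f t := by
    intro x
    have hsum := intervalIntegral.integral_Iic_add_Ioi (μ := volume) (b := x)
      hint.integrableOn hint.integrableOn
    rw [h0] at hsum
    rw [integral_Ici_eq_integral_Ioi]
    exact eq_neg_of_add_eq_zero_left hsum
  have part2 : ∀ x : ℝ, HasDerivAt (fun y => ∫ t in Set.Iic y, f t) (f x) x := by
    intro x
    have hrepr : (fun y : ℝ => ∫ t in Set.Iic y, f t)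
        = fun y : ℝ => (∫ t in Set.Iic (0 : ℝ), f t) + ∫ t in (0 : ℝ)..y, f t := by
      funext y
      rw [← intervalIntegral.integral_Iic_sub_Iic hint.integrableOn hint.integrableOn]
      ring
    rw [hrepr]
    exact (intervalIntegral.integral_hasDerivAt_right (hint.intervalIntegrable)
      (f.continuous.stronglyMeasurable.stronglyMeasurableAtFilter)
      f.continuous.continuousAt).const_add _
  have part4 : ∀ k : ℕ,
      Integrable (fun t : ℝ => ((1 + t ^ 2 : ℝ) ^ (-((k : ℝ) / 2) - 2) : ℝ)) ∧
      ∀ x : ℝ,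
        Real.sqrt (1 + x ^ 2) ^ k * ‖∫ t in Set.Iic x, f t‖ ≤
          rho1 (2 * k + 4) (⇑f) *
            ∫ t : ℝ, ((1 + t ^ 2 : ℝ) ^ (-((k : ℝ) / 2) - 2) : ℝ) := by
    intro k
    have hc : -((k : ℝ) / 2) - 2 ≤ -1 := by
      have : (0 : ℝ) ≤ (k : ℝ) / 2 := by positivity
      linarith
    refine ⟨integrable_aux hc, fun x => ?_⟩
    rcases le_total x 0 with hx | hx
    · exact set_bound f k x measurableSet_Iic (fun t ht => by
        have h1 : t ≤ x := ht
        nlinarith)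
    · rw [part1 x, norm_neg]
      exact set_bound f k x measurableSet_Ici (fun t ht => by
        have h1 : x ≤ t := ht
        nlinarith)
  have hdG : deriv (fun y : ℝ => ∫ t in Set.Iic y, f t) = ⇑f :=
    funext fun x => (part2 x).deriv
  have hg_smooth : ContDiff ℝ ∞ (fun y : ℝ => ∫ t in Set.Iic y, f t) := by
    rw [contDiff_infty_iff_deriv]
    exact ⟨fun x => (part2 x).differentiableAt, by rw [hdG]; exact f.smooth'⟩
  have hdecay : ∀ k n : ℕ, ∃ C : ℝ, ∀ x : ℝ,
      ‖x‖ ^ k * ‖iteratedFDeriv ℝ n (fun y : ℝ => ∫ t in Set.Iic y, f t) x‖ ≤ C := by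
    intro k n
    match n with
    | 0 =>
      refine ⟨rho1 (2 * k + 4) (⇑f) *
        ∫ t : ℝ, ((1 + t ^ 2 : ℝ) ^ (-((k : ℝ) / 2) - 2) : ℝ), fun x => ?_⟩
      rw [norm_iteratedFDeriv_zero]
      refine le_trans ?_ ((part4 k).2 x)
      have hx : ‖x‖ ≤ Real.sqrt (1 + x ^ 2) := by
        rw [Real.norm_eq_abs, ← Real.sqrt_sq_eq_abs]
        exact Real.sqrt_le_sqrt (by linarith)
      gcongr
    | n + 1 =>
      obtain ⟨C, hC⟩ := f.decay' k n
      refine ⟨C, fun x => ?_⟩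
      rw [norm_iteratedFDeriv_eq_norm_iteratedDeriv, iteratedDeriv_succ', hdG,
        ← norm_iteratedFDeriv_eq_norm_iteratedDeriv]
      exact hC x
  set G : SchwartzMap ℝ ℂ := ⟨_, hg_smooth, hdecay⟩ with hGdef
  have hG : ⇑G = fun y : ℝ => ∫ t in Set.Iic y, f t := rfl
  have hGderiv : ∀ x : ℝ, HasDerivAt (⇑G) (f x) x := fun x => part2 x
  have hmom : ∀ m : ℕ, ∫ x : ℝ, (x : ℂ) ^ m * G x = 0 := by
    intro m
    have hm1 : ((m : ℂ) + 1) ≠ 0 := Nat.cast_add_one_ne_zero m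
    set u : ℝ → ℂ := fun y => ((m : ℂ) + 1)⁻¹ * (y : ℂ) ^ (m + 1) with hu_def
    have hu : ∀ x : ℝ, HasDerivAt u ((x : ℂ) ^ m) x := by
      intro x
      have h := ((hasDerivAt_pow (m + 1) ((x : ℝ) : ℂ)).comp_ofReal).const_mul
        (((m : ℂ) + 1)⁻¹)
      have he : ((m : ℂ) + 1)⁻¹ * ((↑(m + 1) : ℂ) * (x : ℂ) ^ (m + 1 - 1)) = (x : ℂ) ^ m := by
        push_cast
        exact inv_mul_cancel_left₀ hm1 _
      rw [he] at h
      exact h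
    have huv' : Integrable (fun x : ℝ => u x * f x) := by
      have h := (integrable_cpoly_mul f (m + 1)).const_mul (((m : ℂ) + 1)⁻¹)
      simpa [hu_def, mul_assoc] using h
    have hu'v : Integrable (fun x : ℝ => (x : ℂ) ^ m * G x) := integrable_cpoly_mul G m
    have huv : Integrable (fun x : ℝ => u x * G x) := by
      have h := (integrable_cpoly_mul G (m + 1)).const_mul (((m : ℂ) + 1)⁻¹)
      simpa [hu_def, mul_assoc] using h
    have hIBP := integral_mul_deriv_eq_deriv_mul_of_integrable (fun x _ => hu x) (fun x _ => hGderiv x) huv' hu'v huv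
    have hL : ∫ x : ℝ, u x * f x = 0 := by
      have h2 : ∫ x : ℝ, u x * f x
          = ((m : ℂ) + 1)⁻¹ * ∫ x : ℝ, (x : ℂ) ^ (m + 1) * f x := by
        rw [← integral_const_mul]
        congr 1
        funext x
        rw [hu_def]
        ring
      rw [h2, hf (m + 1), mul_zero]
    rw [hL] at hIBP
    exact neg_eq_zero.mp hIBP.symm
  have part5 : ∀ ξ : ℝ,
      VectorFourier.fourierIntegral Real.fourierChar volume (innerₗ ℝ) (⇑f) ξ =
        2 * (Real.pi : ℂ) * Complex.I * (ξ : ℂ) *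
          VectorFourier.fourierIntegral Real.fourierChar volume (innerₗ ℝ)
            (fun x => ∫ t in Set.Iic x, f t) ξ := by
    intro ξ
    have h := Real.fourier_deriv (f := fun y : ℝ => ∫ t in Set.Iic y, f t)
      G.integrable (fun x => (part2 x).differentiableAt) (by rw [hdG]; exact hint)
    have h2 := congrFun h ξ
    rw [hdG, smul_eq_mul] at h2
    exact h2
  exact ⟨part1, part2, ⟨G, hG, hmom⟩, part4, part5⟩

end
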